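/- Let P₁ and P₂ be hereditary topological radicals on Banach algebras. Then the map P₀ : A ↦ P₁(A) ∩ P₂(A) is again a hereditary topological radical; in particular P₀(A/P₀(A)) = 0 for every Banach algebra A. -/

import Mathlib

section Defs

variable (B : Type*) [NonUnitalNormedRing B] [NormedSpace ℂ B]
  [SMulCommClass ℂ B B] [IsScalarTower ℂ B B]

/-- A closed two-sided ideal of a (not necessarily unital) complex normed algebra. -/
structure ClosedIdeal where
  carrier : Submodule ℂ B
  isClosed : IsClosed (carrier : Set B)
  mul_mem_left : ∀ (x : B) ⦃a : B⦄, a ∈ carrier → x * a ∈ carrier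
  mul_mem_right : ∀ (x : B) ⦃a : B⦄, a ∈ carrier → a * x ∈ carrier

variable {B}

/-- The two-sided multiplication map `W_b : x ↦ b x b` as a linear map. -/
def Wop (b : B) : B →ₗ[ℂ] B where
  toFun x := b * x * b
  map_add' x y := by simp [mul_add, add_mul]
  map_smul' c x := by simp [mul_smul_comm, smul_mul_assoc]

/-- An element `b` of a Banach algebra is *compact* if `x ↦ b x b` is a compact operator. -/
def IsCompactElement' (b : B) : Prop := IsCompactOperator (Wop b)

end Defs

section Instances

variable {B : Type*} [NonUnitalNormedRing B] [NormedSpace ℂ B]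
  [SMulCommClass ℂ B B] [IsScalarTower ℂ B B]

namespace ClosedIdeal

instance (J : ClosedIdeal B) : Mul J.carrier :=
  ⟨fun x y => ⟨(x : B) * y, J.mul_mem_left x y.2⟩⟩

@[simp] theorem coe_mul (J : ClosedIdeal B) (x y : J.carrier) :
    ((x * y : J.carrier) : B) = (x : B) * y := rfl

instance (J : ClosedIdeal B) : NonUnitalNormedRing J.carrier :=
  { (inferInstance : NormedAddCommGroup J.carrier) with
    mul := (· * ·)
    mul_assoc := fun x y z => Subtype.ext (mul_assoc (x : B) y z)
    left_distrib := fun x y z => Subtype.ext (mul_add (x : B) y z)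
    right_distrib := fun x y z => Subtype.ext (add_mul (x : B) y z)
    zero_mul := fun x => Subtype.ext (zero_mul (x : B))
    mul_zero := fun x => Subtype.ext (mul_zero (x : B))
    norm_mul_le := fun x y => norm_mul_le (x : B) y }

instance (J : ClosedIdeal B) : SMulCommClass ℂ J.carrier J.carrier :=
  ⟨fun c x y => Subtype.ext (mul_smul_comm c (x : B) y).symm⟩

instance (J : ClosedIdeal B) : IsScalarTower ℂ J.carrier J.carrier :=
  ⟨fun c x y => Subtype.ext (smul_mul_assoc c (x : B) y)⟩

instance (J : ClosedIdeal B) [CompleteSpace B] : CompleteSpace J.carrier :=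
  J.isClosed.completeSpace_coe

end ClosedIdeal

end Instances

section QuotInstances

variable {B : Type*} [NonUnitalNormedRing B] [NormedSpace ℂ B]
  [SMulCommClass ℂ B B] [IsScalarTower ℂ B B] (J : ClosedIdeal B)

instance : Mul (B ⧸ J.carrier) :=
  ⟨Quotient.map₂ (· * ·) (by
    intro a a' ha b b' hb
    replace ha : a - a' ∈ J.carrier := (Submodule.quotientRel_def _).mp ha
    replace hb : b - b' ∈ J.carrier := (Submodule.quotientRel_def _).mp hb
    refine (Submodule.quotientRel_def _).mpr ?_
    have h : a * b - a' * b' = a * (b - b') + (a - a') * b' := by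
      rw [mul_sub, sub_mul]; abel
    rw [h]
    exact J.carrier.add_mem (J.mul_mem_left a hb) (J.mul_mem_right b' ha))⟩

@[simp] theorem ClosedIdeal.mk_mul (a b : B) :
    (Submodule.Quotient.mk (a * b) : B ⧸ J.carrier) =
      Submodule.Quotient.mk a * Submodule.Quotient.mk b := rfl

end QuotInstances

section QuotRing

variable {B : Type*} [NonUnitalNormedRing B] [NormedSpace ℂ B]
  [SMulCommClass ℂ B B] [IsScalarTower ℂ B B] (J : ClosedIdeal B)

noncomputable instance : NormedAddCommGroup (B ⧸ J.carrier) :=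
  have : IsClosed ((J.carrier : Submodule ℂ B) : Set B) := J.isClosed
  Submodule.Quotient.normedAddCommGroup J.carrier

noncomputable instance : NonUnitalNormedRing (B ⧸ J.carrier) :=
  { (inferInstance : NormedAddCommGroup (B ⧸ J.carrier)) with
    mul := (· * ·)
    mul_assoc := fun q1 q2 q3 => Quotient.inductionOn₃ q1 q2 q3 fun a b c =>
      congrArg Submodule.Quotient.mk (mul_assoc a b c)
    left_distrib := fun q1 q2 q3 => Quotient.inductionOn₃ q1 q2 q3 fun a b c =>
      congrArg Submodule.Quotient.mk (mul_add a b c)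
    right_distrib := fun q1 q2 q3 => Quotient.inductionOn₃ q1 q2 q3 fun a b c =>
      congrArg Submodule.Quotient.mk (add_mul a b c)
    zero_mul := fun q => Quotient.inductionOn q fun a =>
      congrArg Submodule.Quotient.mk (zero_mul a)
    mul_zero := fun q => Quotient.inductionOn q fun a =>
      congrArg Submodule.Quotient.mk (mul_zero a)
    norm_mul_le := fun q1 q2 => by
      have key : ∀ ε : ℝ, 0 < ε → ‖q1 * q2‖ ≤ (‖q1‖ + ε) * (‖q2‖ + ε) := by
        intro ε hε
        obtain ⟨a, rfl, ha⟩ := Submodule.Quotient.norm_mk_lt q1 hε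
        obtain ⟨b, rfl, hb⟩ := Submodule.Quotient.norm_mk_lt q2 hε
        calc ‖(Submodule.Quotient.mk a : B ⧸ J.carrier) * Submodule.Quotient.mk b‖
            = ‖(Submodule.Quotient.mk (a * b) : B ⧸ J.carrier)‖ := by
              rw [ClosedIdeal.mk_mul]
          _ ≤ ‖a * b‖ := Submodule.Quotient.norm_mk_le _ _
          _ ≤ ‖a‖ * ‖b‖ := norm_mul_le a b
          _ ≤ (‖(Submodule.Quotient.mk a : B ⧸ J.carrier)‖ + ε) *
                (‖(Submodule.Quotient.mk b : B ⧸ J.carrier)‖ + ε) := by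
              apply mul_le_mul ha.le hb.le (norm_nonneg b)
              positivity
      have cont : Filter.Tendsto (fun ε : ℝ => (‖q1‖ + ε) * (‖q2‖ + ε))
          (nhdsWithin 0 (Set.Ioi 0)) (nhds (‖q1‖ * ‖q2‖)) := by
        have h0 : Filter.Tendsto (fun ε : ℝ => (‖q1‖ + ε) * (‖q2‖ + ε))
            (nhds 0) (nhds ((‖q1‖ + 0) * (‖q2‖ + 0))) :=
          Continuous.tendsto (by continuity) 0
        simpa using h0.mono_left nhdsWithin_le_nhds
      exact ge_of_tendsto cont
        (Filter.eventually_of_mem self_mem_nhdsWithin fun ε hε => key ε hε) }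

noncomputable instance : SMulCommClass ℂ (B ⧸ J.carrier) (B ⧸ J.carrier) :=
  ⟨fun c q1 q2 => Quotient.inductionOn₂ q1 q2 fun a b =>
    congrArg Submodule.Quotient.mk (mul_smul_comm c a b).symm⟩

noncomputable instance : IsScalarTower ℂ (B ⧸ J.carrier) (B ⧸ J.carrier) :=
  ⟨fun c q1 q2 => Quotient.inductionOn₂ q1 q2 fun a b =>
    congrArg Submodule.Quotient.mk (smul_mul_assoc c a b)⟩

end QuotRing

section Hypo

variable (B : Type*) [NonUnitalNormedRing B] [NormedSpace ℂ B]
  [SMulCommClass ℂ B B] [IsScalarTower ℂ B B]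

/-- A Banach algebra is *hypocompact* if every nonzero quotient by a closed
two-sided ideal contains a nonzero compact element. -/
def IsHypocompact : Prop :=
  ∀ J : ClosedIdeal B, J.carrier ≠ ⊤ →
    ∃ q : B ⧸ J.carrier, q ≠ 0 ∧ IsCompactElement' q

end Hypo

universe u

/-- A hereditary topological radical on the class of complex Banach algebras:
an assignment of a closed two-sided ideal `P(A)` to every Banach algebra `A`
such that (R1) `P(A / P(A)) = 0`, (R2) `P(J) = J ∩ P(A)` for every closed ideal
`J` of `A`, and (R3) `f(P(A)) ⊆ P(B)` for every continuous surjective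
homomorphism `f : A → B`. -/
structure TopologicalRadical where
  ideal : ∀ (A : Type u) [NonUnitalNormedRing A] [NormedSpace ℂ A]
    [SMulCommClass ℂ A A] [IsScalarTower ℂ A A] [CompleteSpace A], ClosedIdeal A
  quot_eq_bot : ∀ (A : Type u) [NonUnitalNormedRing A] [NormedSpace ℂ A]
    [SMulCommClass ℂ A A] [IsScalarTower ℂ A A] [CompleteSpace A],
    (ideal (A ⧸ (ideal A).carrier)).carrier = ⊥
  hereditary : ∀ (A : Type u) [NonUnitalNormedRing A] [NormedSpace ℂ A]
    [SMulCommClass ℂ A A] [IsScalarTower ℂ A A] [CompleteSpace A]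
    (J : ClosedIdeal A),
    Subtype.val '' ((ideal J.carrier).carrier : Set J.carrier) =
      (J.carrier : Set A) ∩ ((ideal A).carrier : Set A)
  map_mem : ∀ (A B : Type u) [NonUnitalNormedRing A] [NormedSpace ℂ A]
    [SMulCommClass ℂ A A] [IsScalarTower ℂ A A] [CompleteSpace A]
    [NonUnitalNormedRing B] [NormedSpace ℂ B]
    [SMulCommClass ℂ B B] [IsScalarTower ℂ B B] [CompleteSpace B]
    (f : A →ₙₐ[ℂ] B), Continuous f → Function.Surjective f →
    ∀ a ∈ (ideal A).carrier, f a ∈ (ideal B).carrier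



section Aux

variable {A : Type u} [NonUnitalNormedRing A] [NormedSpace ℂ A]
  [SMulCommClass ℂ A A] [IsScalarTower ℂ A A] [CompleteSpace A]

/-- The intersection of two closed ideals. -/
noncomputable def ClosedIdeal.inf' (I J : ClosedIdeal A) : ClosedIdeal A where
  carrier := I.carrier ⊓ J.carrier
  isClosed := by
    have h := I.isClosed.inter J.isClosed
    simpa [Submodule.coe_inf] using h
  mul_mem_left := fun x a ha => by
    obtain ⟨h1, h2⟩ := Submodule.mem_inf.mp ha
    exact Submodule.mem_inf.mpr ⟨I.mul_mem_left x h1, J.mul_mem_left x h2⟩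
  mul_mem_right := fun x a ha => by
    obtain ⟨h1, h2⟩ := Submodule.mem_inf.mp ha
    exact Submodule.mem_inf.mpr ⟨I.mul_mem_right x h1, J.mul_mem_right x h2⟩

/-- The factor map `A ⧸ I → A ⧸ J` for `I ≤ J`, as a non-unital algebra hom. -/
noncomputable def quotFactor (I J : ClosedIdeal A) (h : I.carrier ≤ J.carrier) :
    (A ⧸ I.carrier) →ₙₐ[ℂ] (A ⧸ J.carrier) where
  toFun := Submodule.mapQ I.carrier J.carrier LinearMap.id h
  map_smul' c x := map_smul _ c x
  map_zero' := map_zero _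
  map_add' x y := map_add _ x y
  map_mul' x y := Quotient.inductionOn₂ x y fun a b => by
    show Submodule.mapQ I.carrier J.carrier LinearMap.id h
        (Submodule.Quotient.mk a * Submodule.Quotient.mk b) =
      Submodule.mapQ I.carrier J.carrier LinearMap.id h (Submodule.Quotient.mk a) *
        Submodule.mapQ I.carrier J.carrier LinearMap.id h (Submodule.Quotient.mk b)
    rw [← ClosedIdeal.mk_mul I a b]
    simp only [Submodule.mapQ_apply, LinearMap.id_apply]
    rw [ClosedIdeal.mk_mul J a b]

theorem quotFactor_mk (I J : ClosedIdeal A) (h : I.carrier ≤ J.carrier) (a : A) :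
    quotFactor I J h (Submodule.Quotient.mk a) = Submodule.Quotient.mk a := by
  show Submodule.mapQ I.carrier J.carrier LinearMap.id h (Submodule.Quotient.mk a) = _
  rw [Submodule.mapQ_apply, LinearMap.id_apply]

theorem quotFactor_norm_le (I J : ClosedIdeal A) (h : I.carrier ≤ J.carrier)
    (x : A ⧸ I.carrier) : ‖quotFactor I J h x‖ ≤ ‖x‖ := by
  refine le_of_forall_pos_le_add fun ε hε => ?_
  obtain ⟨a, rfl, ha⟩ := Submodule.Quotient.norm_mk_lt x hε
  rw [quotFactor_mk]
  exact le_trans (Submodule.Quotient.norm_mk_le _ a) ha.le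

theorem quotFactor_continuous (I J : ClosedIdeal A) (h : I.carrier ≤ J.carrier) :
    Continuous (quotFactor I J h) :=
  (AddMonoidHomClass.lipschitz_of_bound (Submodule.mapQ I.carrier J.carrier LinearMap.id h) 1
    (fun x => by rw [one_mul]; exact quotFactor_norm_le I J h x)).continuous

theorem quotFactor_surjective (I J : ClosedIdeal A) (h : I.carrier ≤ J.carrier) :
    Function.Surjective (quotFactor I J h) := fun y =>
  Quotient.inductionOn y fun a => ⟨Submodule.Quotient.mk a, quotFactor_mk I J h a⟩

end Aux

noncomputable def infRadicalIdeal (P₁ P₂ : TopologicalRadical.{u}) (A : Type u)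
    [NonUnitalNormedRing A] [NormedSpace ℂ A]
    [SMulCommClass ℂ A A] [IsScalarTower ℂ A A] [CompleteSpace A] : ClosedIdeal A :=
  ClosedIdeal.inf' (P₁.ideal A) (P₂.ideal A)

theorem infRadicalIdeal_carrier (P₁ P₂ : TopologicalRadical.{u}) (A : Type u)
    [NonUnitalNormedRing A] [NormedSpace ℂ A]
    [SMulCommClass ℂ A A] [IsScalarTower ℂ A A] [CompleteSpace A] :
    (infRadicalIdeal P₁ P₂ A).carrier = (P₁.ideal A).carrier ⊓ (P₂.ideal A).carrier := rfl

noncomputable def infRadical (P₁ P₂ : TopologicalRadical.{u}) : TopologicalRadical.{u} where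
  ideal := infRadicalIdeal P₁ P₂
  quot_eq_bot := by
    intro A _ _ _ _ _
    rw [Submodule.eq_bot_iff]
    intro x hx
    have hx' : x ∈ (P₁.ideal _).carrier ⊓ (P₂.ideal _).carrier := hx
    obtain ⟨h1, h2⟩ := Submodule.mem_inf.mp hx' 
    obtain ⟨a, rfl⟩ := Submodule.Quotient.mk_surjective _ x
    have key : ∀ (P : TopologicalRadical.{u}),
        (infRadicalIdeal P₁ P₂ A).carrier ≤ (P.ideal A).carrier →
        Submodule.Quotient.mk a ∈
          (P.ideal (A ⧸ (infRadicalIdeal P₁ P₂ A).carrier)).carrier →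
        a ∈ (P.ideal A).carrier := by
      intro P hle hmem
      have hmap := P.map_mem _ _ (quotFactor (infRadicalIdeal P₁ P₂ A) (P.ideal A) hle)
        (quotFactor_continuous _ _ hle) (quotFactor_surjective _ _ hle) _ hmem
      rw [P.quot_eq_bot A, Submodule.mem_bot, quotFactor_mk] at hmap
      exact (Submodule.Quotient.mk_eq_zero _).mp hmap
    have ha1 := key P₁ inf_le_left h1
    have ha2 := key P₂ inf_le_right h2
    exact (Submodule.Quotient.mk_eq_zero _).mpr
      (by rw [infRadicalIdeal_carrier]; exact Submodule.mem_inf.mpr ⟨ha1, ha2⟩)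
  hereditary := by
    intro A _ _ _ _ _ J
    have h1 := P₁.hereditary A J
    have h2 := P₂.hereditary A J
    show Subtype.val '' (((P₁.ideal J.carrier).carrier ⊓ (P₂.ideal J.carrier).carrier :
        Submodule ℂ J.carrier) : Set J.carrier) = _
    rw [Submodule.coe_inf, Set.image_inter Subtype.val_injective, h1, h2,
      infRadicalIdeal_carrier, Submodule.coe_inf]
    ext x
    simp only [Set.mem_inter_iff]
    tauto
  map_mem := by
    intro A B _ _ _ _ _ _ _ _ _ _ f hc hs a ha
    rw [infRadicalIdeal_carrier] at ha ⊢
    obtain ⟨h1, h2⟩ := Submodule.mem_inf.mp ha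
    exact Submodule.mem_inf.mpr ⟨P₁.map_mem A B f hc hs a h1, P₂.map_mem A B f hc hs a h2⟩

/-- the intersection of two hereditary topological radicals is
again a hereditary topological radical (in particular `P₀(A / P₀(A)) = 0`). -/
theorem topologicalRadical_inf (P₁ P₂ : TopologicalRadical.{u}) :
    ∃ P₀ : TopologicalRadical.{u},
      ∀ (A : Type u) [NonUnitalNormedRing A] [NormedSpace ℂ A]
        [SMulCommClass ℂ A A] [IsScalarTower ℂ A A] [CompleteSpace A],
        (P₀.ideal A).carrier = (P₁.ideal A).carrier ⊓ (P₂.ideal A).carrier := by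

  exact ⟨infRadical P₁ P₂, fun A _ _ _ _ _ => rfl⟩
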